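/- Let F₀ : [0,1] × [0,T] → [0,1] be continuous and define Fₖ₊₁(y,t) ≤ R ∫_y^1 ∫_0^t Fₖ(z,s) ds dz for continuous nonnegative functions Fₖ on [0,1] × [0,T] with 0 ≤ F₀ ≤ 1. Then 0 ≤ Fₖ(y,t) ≤ e^{2Rt} 2^{-k} for all y ∈ [0,1], t ∈ [0,T], and k ≥ 0. -/

import Mathlib

open Set MeasureTheory

theorem stmt_1 (T R : ℝ) (hT : 0 < T) (hR : 0 < R) (F : ℕ → ℝ → ℝ → ℝ)
    (hcont : ∀ k, ContinuousOn (fun p : ℝ × ℝ => F k p.1 p.2) (Icc 0 1 ×ˢ Icc 0 T))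
    (hnonneg : ∀ k, ∀ y ∈ Icc (0:ℝ) 1, ∀ t ∈ Icc (0:ℝ) T, 0 ≤ F k y t)
    (hF0 : ∀ y ∈ Icc (0:ℝ) 1, ∀ t ∈ Icc (0:ℝ) T, F 0 y t ≤ 1)
    (hrec : ∀ k, ∀ y ∈ Icc (0:ℝ) 1, ∀ t ∈ Icc (0:ℝ) T,
      F (k+1) y t ≤ R * ∫ z in y..(1:ℝ), ∫ s in (0:ℝ)..t, F k z s) :
    ∀ k, ∀ y ∈ Icc (0:ℝ) 1, ∀ t ∈ Icc (0:ℝ) T,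
      0 ≤ F k y t ∧ F k y t ≤ Real.exp (2 * R * t) / 2 ^ k := by
  intro k
  induction k with
  | zero =>
    intro y hy t ht
    refine ⟨hnonneg 0 y hy t ht, ?_⟩
    have h1 : (1:ℝ) ≤ Real.exp (2 * R * t) :=
      Real.one_le_exp (mul_nonneg (by positivity) ht.1)
    simpa using (hF0 y hy t ht).trans h1
  | succ k ih =>
    intro y hy t ht
    refine ⟨hnonneg _ y hy t ht, ?_⟩
    have ht0 : 0 ≤ t := ht.1
    have hy0 : 0 ≤ y := hy.1
    have hy1 : y ≤ 1 := hy.2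
    set C : ℝ := (2 * R)⁻¹ * (Real.exp (2 * R * t) - 1) / 2 ^ k with hCdef
    have hexp1 : (1:ℝ) ≤ Real.exp (2 * R * t) :=
      Real.one_le_exp (mul_nonneg (by positivity) ht0)
    have hC : 0 ≤ C := by
      apply div_nonneg _ (by positivity)
      exact mul_nonneg (by positivity) (by linarith)
    -- value of the comparison integral
    have hval : (∫ s in (0:ℝ)..t, Real.exp (2 * R * s) / 2 ^ k) = C := by
      rw [intervalIntegral.integral_div]
      have h2R : (2*R) ≠ 0 := by positivity
      rw [intervalIntegral.integral_comp_mul_left (f := Real.exp) h2R,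
        show 2*R*0 = (0:ℝ) by ring, integral_exp, Real.exp_zero,
        smul_eq_mul]
    have hIntExp : IntervalIntegrable (fun s => Real.exp (2 * R * s) / 2 ^ k)
        volume 0 t := by
      apply Continuous.intervalIntegrable
      continuity
    -- inner bound
    have hinner : ∀ z ∈ Icc (0:ℝ) 1, (∫ s in (0:ℝ)..t, F k z s) ≤ C := by
      intro z hz
      have h1 : (∫ s in (0:ℝ)..t, F k z s)
          ≤ ∫ s in (0:ℝ)..t, Real.exp (2 * R * s) / 2 ^ k := by
        rw [intervalIntegral.integral_of_le ht0, intervalIntegral.integral_of_le ht0]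
        apply integral_mono_of_nonneg
        · filter_upwards [ae_restrict_mem measurableSet_Ioc] with s hs
          exact hnonneg k z hz s ⟨hs.1.le, hs.2.trans ht.2⟩
        · exact hIntExp.1
        · filter_upwards [ae_restrict_mem measurableSet_Ioc] with s hs
          exact (ih z hz s ⟨hs.1.le, hs.2.trans ht.2⟩).2
      exact h1.trans_eq hval
    -- outer bound
    have houter : (∫ z in y..(1:ℝ), ∫ s in (0:ℝ)..t, F k z s) ≤ C := by
      rw [intervalIntegral.integral_of_le hy1]
      have hstep : (∫ z in Ioc y 1, ∫ s in (0:ℝ)..t, F k z s)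
          ≤ ∫ _z in Ioc y (1:ℝ), C := by
        apply integral_mono_of_nonneg
        · filter_upwards [ae_restrict_mem measurableSet_Ioc] with z hz
          rw [intervalIntegral.integral_of_le ht0]
          apply integral_nonneg_of_ae
          filter_upwards [ae_restrict_mem measurableSet_Ioc] with s hs
          exact hnonneg k z ⟨hy0.trans hz.1.le, hz.2⟩ s ⟨hs.1.le, hs.2.trans ht.2⟩
        · exact integrableOn_const measure_Ioc_lt_top.ne
        · filter_upwards [ae_restrict_mem measurableSet_Ioc] with z hz
          exact hinner z ⟨hy0.trans hz.1.le, hz.2⟩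
      have hconst : (∫ _z in Ioc y (1:ℝ), C) = (1 - y) * C := by
        rw [setIntegral_const, measureReal_def, Real.volume_Ioc, ENNReal.toReal_ofReal (by linarith)]
        ring_nf
      rw [hconst] at hstep
      refine hstep.trans ?_
      nlinarith
    have hmain := hrec k y hy t ht
    have : R * (∫ z in y..(1:ℝ), ∫ s in (0:ℝ)..t, F k z s) ≤ R * C :=
      mul_le_mul_of_nonneg_left houter hR.le
    refine (hmain.trans this).trans ?_
    have hRC : R * C = (Real.exp (2 * R * t) - 1) / (2 * 2 ^ k) := by
      rw [hCdef]; field_simp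
    rw [hRC, pow_succ, show (2:ℝ)^k * 2 = 2 * 2^k by ring]
    gcongr
    linarith
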